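/- Let n ≥ 1 and (t_j)_{j≥-n} be nonnegative with t_{-n} > 0, Σ_{k≥0} t_{k-n} = 1, and Σ_{k≥1} k t_{k-n} = n. Then every positive solution (x_k) of x_k = Σ_{j=-n}^{k} t_j x_{k-j} satisfies Σ_{k≥0} x_k = ∞ and limsup_{k→∞} x_k = ∞, i.e., the solution is unbounded. -/

import Mathlib

open Filter Finset
set_option maxHeartbeats 1000000

private lemma stmt16_bound (n : ℕ) (hn : 1 ≤ n) (a : ℕ → ℝ)
    (ha0 : ∀ k, 0 ≤ a k) (ha0pos : 0 < a 0)
    (hsum : Summable a) (hsum1 : (∑' k, a k) = 1)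
    (hmom : Summable fun k : ℕ => (k : ℝ) * a k)
    (hγ : (∑' k : ℕ, (k : ℝ) * a k) = n)
    (x : ℕ → ℝ) (hxpos : ∀ k, 0 < x k)
    (hrec : ∀ k : ℕ, x k = ∑ j ∈ Finset.range (k + n + 1), a j * x (k + n - j))
    (M : ℝ) (hM0 : 0 < M) (hM : ∀ k, x k ≤ M)
    (N : ℕ)
    (z : ℝ) (hz0 : 0 < z) (hz1 : z < 1) : a 0 * x 0 ≤ M * ((1 - z) * (N:ℝ)^2 + (∑' k : ℕ, ((k + N : ℕ) : ℝ) * a (k + N))) := by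
  have h1z : 0 < 1 - z := by linarith
  -- basic summabilities
  have hgeo : Summable fun k : ℕ => z ^ k := summable_geometric_of_lt_one hz0.le hz1
  have ha_le_one : ∀ k, a k ≤ 1 := by
    intro k
    calc a k ≤ ∑' k, a k := Summable.le_tsum hsum k (fun j _ => ha0 j)
    _ = 1 := hsum1
  have hf_nonneg : ∀ k, 0 ≤ a k * z ^ k := fun k => mul_nonneg (ha0 k) (pow_nonneg hz0.le k)
  have hg_nonneg : ∀ k, 0 ≤ x k * z ^ k := fun k => mul_nonneg (hxpos k).le (pow_nonneg hz0.le k)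
  have hf_sum : Summable fun k => a k * z ^ k :=
    Summable.of_nonneg_of_le hf_nonneg
      (fun k => by nlinarith [pow_nonneg hz0.le k, ha_le_one k, ha0 k]) hgeo
  have hg_sum : Summable fun k => x k * z ^ k :=
    Summable.of_nonneg_of_le hg_nonneg
      (fun k => mul_le_mul_of_nonneg_right (hM k) (pow_nonneg hz0.le k)) (hgeo.mul_left M)
  set G : ℝ := ∑' k, a k * z ^ k with hG
  set X : ℝ := ∑' k, x k * z ^ k with hX
  -- Cauchy product identity
  have hf_norm : Summable fun k => ‖a k * z ^ k‖ :=
    hf_sum.congr fun k => (Real.norm_of_nonneg (hf_nonneg k)).symm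
  have hg_norm : Summable fun k => ‖x k * z ^ k‖ :=
    hg_sum.congr fun k => (Real.norm_of_nonneg (hg_nonneg k)).symm
  set c : ℕ → ℝ := fun N => ∑ j ∈ range (N + 1), (a j * z ^ j) * (x (N - j) * z ^ (N - j)) with hc
  have hCauchy : G * X = ∑' k, c k :=
    tsum_mul_tsum_eq_tsum_sum_range_of_summable_norm hf_norm hg_norm
  have hc_sum : Summable c :=
    (summable_norm_sum_mul_range_of_summable_norm hf_norm hg_norm).of_norm
  have hc_nonneg : ∀ k, 0 ≤ c k := by
    intro k
    exact Finset.sum_nonneg fun j _ => mul_nonneg (hf_nonneg j) (hg_nonneg _)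
  have hc_shift : ∀ k : ℕ, c (k + n) = x k * z ^ k * z ^ n := by
    intro k
    have : c (k + n) = ∑ j ∈ range (k + n + 1), (a j * x (k + n - j)) * z ^ (k + n) := by
      rw [hc]
      refine Finset.sum_congr rfl fun j hj => ?_
      have hj' : j ≤ k + n := Finset.mem_range_succ_iff.mp hj
      calc (a j * z ^ j) * (x (k + n - j) * z ^ (k + n - j))
          = (a j * x (k + n - j)) * (z ^ j * z ^ (k + n - j)) := by ring
        _ = (a j * x (k + n - j)) * z ^ (k + n) := by
            rw [← pow_add, Nat.add_sub_cancel' hj']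
    rw [this, ← Finset.sum_mul, ← hrec k, pow_add]; ring
  have hsplit : (∑ k ∈ range n, c k) + ∑' k, c (k + n) = ∑' k, c k :=
    Summable.sum_add_tsum_nat_add n hc_sum
  have htail : (∑' k, c (k + n)) = X * z ^ n := by
    rw [tsum_congr hc_shift, tsum_mul_right]
  set B : ℝ := ∑ k ∈ range n, c k with hB
  have hident : X * (G - z ^ n) = B := by
    have h := hsplit
    rw [htail, ← hCauchy] at h
    nlinarith [h]
  have hB_lb : a 0 * x 0 ≤ B := by
    have h0 : c 0 = a 0 * x 0 := by simp [hc]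
    calc a 0 * x 0 = c 0 := h0.symm
      _ ≤ B := Finset.single_le_sum (fun k _ => hc_nonneg k) (Finset.mem_range.mpr hn)
  -- bounds on X
  have hX_nonneg : 0 ≤ X := tsum_nonneg hg_nonneg
  have hXz : X * (1 - z) ≤ M := by
    have h0 : X ≤ ∑' k : ℕ, M * z ^ k :=
      Summable.tsum_le_tsum (fun k => mul_le_mul_of_nonneg_right (hM k) (pow_nonneg hz0.le k))
        hg_sum (hgeo.mul_left M)
    have h0' : (∑' k : ℕ, M * z ^ k) = M * (1 - z)⁻¹ := by
      rw [tsum_mul_left, tsum_geometric_of_lt_one hz0.le hz1]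
    have h1 : X ≤ M * (1 - z)⁻¹ := h0.trans_eq h0'
    have h2 : X * (1 - z) ≤ (M * (1 - z)⁻¹) * (1 - z) := mul_le_mul_of_nonneg_right h1 h1z.le
    have h3 : (M * (1 - z)⁻¹) * (1 - z) = M := by field_simp
    linarith
  -- geometric partial sums
  set S : ℕ → ℝ := fun k => ∑ i ∈ range k, z ^ i with hS
  have hgeom_id : ∀ k, (1 - z) * S k = 1 - z ^ k := by
    intro k
    have h := geom_sum_mul z k
    simp only [hS]
    linear_combination -h
  have hS_nonneg : ∀ k, 0 ≤ S k := fun k => Finset.sum_nonneg fun i _ => pow_nonneg hz0.le i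
  have hSle : ∀ k, S k ≤ k := by
    intro k
    calc S k ≤ ∑ i ∈ range k, 1 := Finset.sum_le_sum fun i _ => pow_le_one₀ hz0.le hz1.le
      _ = k := by simp
  set u : ℕ → ℝ := fun k => (k : ℝ) - S k with hu
  have hu_nonneg : ∀ k, 0 ≤ u k := fun k => sub_nonneg.mpr (hSle k)
  have hu_le : ∀ k, u k ≤ k := by
    intro k; simp only [hu]; have := hS_nonneg k; linarith
  have hu_quad : ∀ k, u k ≤ (k : ℝ) ^ 2 * (1 - z) := by
    intro k
    have e : u k = ∑ i ∈ range k, (1 - z ^ i) := by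
      simp only [hu, hS, Finset.sum_sub_distrib, Finset.sum_const, Finset.card_range,
        nsmul_eq_mul, mul_one]
    rw [e]
    calc ∑ i ∈ range k, (1 - z ^ i) ≤ ∑ i ∈ range k, (1 - z) * k := by
          refine Finset.sum_le_sum fun i hi => ?_
          rw [← hgeom_id i]
          refine mul_le_mul_of_nonneg_left ?_ h1z.le
          exact (hSle i).trans (Nat.cast_le.mpr (Finset.mem_range.mp hi).le)
      _ = k * ((1 - z) * k) := by rw [Finset.sum_const, Finset.card_range, nsmul_eq_mul]
      _ = (k : ℝ) ^ 2 * (1 - z) := by ring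
  have hu_sum : Summable fun k => a k * u k :=
    Summable.of_nonneg_of_le (fun k => mul_nonneg (ha0 k) (hu_nonneg k))
      (fun k => by
        calc a k * u k ≤ a k * k := mul_le_mul_of_nonneg_left (hu_le k) (ha0 k)
          _ = (k : ℝ) * a k := by ring) hmom
  set H : ℝ := ∑' k, a k * u k with hH
  have hH_nonneg : 0 ≤ H := tsum_nonneg fun k => mul_nonneg (ha0 k) (hu_nonneg k)
  -- main analytic inequality : G - z^n ≤ (1-z) * H
  have hGH : G - z ^ n ≤ (1 - z) * H := by
    have hw : ∀ k, a k * z ^ k - z ^ n * a k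
        ≤ (1 - z) * (((n : ℝ) * a k - (k : ℝ) * a k) + a k * u k) := by
      intro k
      have e1 : a k * z ^ k - z ^ n * a k = (1 - z) * (a k * (S n - S k)) := by
        linear_combination a k * hgeom_id k - a k * hgeom_id n
      have e2 : a k * (S n - S k) ≤ a k * (((n : ℝ) - k) + u k) := by
        refine mul_le_mul_of_nonneg_left ?_ (ha0 k)
        have h1 := hSle n
        simp only [hu]; linarith
      calc a k * z ^ k - z ^ n * a k = (1 - z) * (a k * (S n - S k)) := e1
        _ ≤ (1 - z) * (a k * (((n : ℝ) - k) + u k)) := mul_le_mul_of_nonneg_left e2 h1z.le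
        _ = (1 - z) * (((n : ℝ) * a k - (k : ℝ) * a k) + a k * u k) := by ring
    have hsum_lhs : Summable fun k => a k * z ^ k - z ^ n * a k :=
      hf_sum.sub (hsum.mul_left _)
    have hs1 : Summable fun k => (n : ℝ) * a k - (k : ℝ) * a k := (hsum.mul_left _).sub hmom
    have hsum_rhs : Summable fun k =>
        (1 - z) * (((n : ℝ) * a k - (k : ℝ) * a k) + a k * u k) :=
      (hs1.add hu_sum).mul_left _
    have hle := Summable.tsum_le_tsum hw hsum_lhs hsum_rhs
    have hlhs : (∑' k, (a k * z ^ k - z ^ n * a k)) = G - z ^ n := by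
      rw [Summable.tsum_sub hf_sum (hsum.mul_left _), tsum_mul_left, hsum1, mul_one]
    have hrhs : (∑' k, (1 - z) * (((n : ℝ) * a k - (k : ℝ) * a k) + a k * u k))
        = (1 - z) * H := by
      rw [tsum_mul_left, Summable.tsum_add hs1 hu_sum, Summable.tsum_sub (hsum.mul_left _) hmom,
        tsum_mul_left, hsum1, hγ]
      simp [hH]
    rw [hlhs, hrhs] at hle
    exact hle
  -- tail bound on H
  have hH_bound : H ≤ (1 - z) * (N : ℝ) ^ 2 + (∑' k : ℕ, ((k + N : ℕ) : ℝ) * a (k + N)) := by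
    have hsplit' : (∑ k ∈ range N, a k * u k) + ∑' k, a (k + N) * u (k + N) = H :=
      Summable.sum_add_tsum_nat_add N hu_sum
    have hhead : (∑ k ∈ range N, a k * u k) ≤ (1 - z) * (N : ℝ) ^ 2 := by
      calc (∑ k ∈ range N, a k * u k) ≤ ∑ k ∈ range N, a k * ((N : ℝ) ^ 2 * (1 - z)) := by
            refine Finset.sum_le_sum fun k hk => ?_
            refine mul_le_mul_of_nonneg_left ((hu_quad k).trans ?_) (ha0 k)
            have : (k : ℝ) ^ 2 ≤ (N : ℝ) ^ 2 := by
              have : (k : ℝ) ≤ N := Nat.cast_le.mpr (Finset.mem_range.mp hk).le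
              nlinarith [Nat.cast_nonneg (α := ℝ) k]
            nlinarith
        _ = (∑ k ∈ range N, a k) * ((N : ℝ) ^ 2 * (1 - z)) := by rw [Finset.sum_mul]
        _ ≤ 1 * ((N : ℝ) ^ 2 * (1 - z)) := by
            refine mul_le_mul_of_nonneg_right ?_ (by positivity)
            rw [← hsum1]
            exact Summable.sum_le_tsum _ (fun k _ => ha0 k) hsum
        _ = (1 - z) * (N : ℝ) ^ 2 := by ring
    have htail' : (∑' k, a (k + N) * u (k + N)) ≤ ∑' k : ℕ, ((k + N : ℕ) : ℝ) * a (k + N) := by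
      refine Summable.tsum_le_tsum (fun k => ?_) ((summable_nat_add_iff N).mpr hu_sum)
        ((summable_nat_add_iff N).mpr hmom)
      calc a (k + N) * u (k + N) ≤ a (k + N) * ((k + N : ℕ) : ℝ) :=
            mul_le_mul_of_nonneg_left (hu_le _) (ha0 _)
        _ = ((k + N : ℕ) : ℝ) * a (k + N) := by ring
    linarith
  -- final chain
  calc a 0 * x 0 ≤ B := hB_lb
    _ = X * (G - z ^ n) := hident.symm
    _ ≤ X * ((1 - z) * H) := mul_le_mul_of_nonneg_left hGH hX_nonneg
    _ = (X * (1 - z)) * H := by ring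
    _ ≤ M * H := mul_le_mul_of_nonneg_right hXz hH_nonneg
    _ ≤ M * ((1 - z) * (N : ℝ) ^ 2 + (∑' k : ℕ, ((k + N : ℕ) : ℝ) * a (k + N))) :=
        mul_le_mul_of_nonneg_left hH_bound hM0.le

/-- Core: no positive solution is bounded. -/
private lemma stmt16_core (n : ℕ) (hn : 1 ≤ n) (a : ℕ → ℝ)
    (ha0 : ∀ k, 0 ≤ a k) (ha0pos : 0 < a 0)
    (hsum : Summable a) (hsum1 : (∑' k, a k) = 1)
    (hmom : Summable fun k : ℕ => (k : ℝ) * a k)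
    (hγ : (∑' k : ℕ, (k : ℝ) * a k) = n)
    (x : ℕ → ℝ) (hxpos : ∀ k, 0 < x k)
    (hrec : ∀ k : ℕ, x k = ∑ j ∈ Finset.range (k + n + 1), a j * x (k + n - j))
    (M : ℝ) (hM : ∀ k, x k ≤ M) : False := by
  have hM0 : 0 < M := lt_of_lt_of_le (hxpos 0) (hM 0)
  have key : ∀ ε : ℝ, 0 < ε → ε < 1 → a 0 * x 0 ≤ M * ε := by
    intro ε hε hε1
    obtain ⟨N, hN⟩ : ∃ N : ℕ, (∑' k : ℕ, ((k + N : ℕ) : ℝ) * a (k + N)) < ε / 2 := by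
      have h2 : (0:ℝ) < ε / 2 := by positivity
      have h3 := (tendsto_sum_nat_add (fun k : ℕ => (k : ℝ) * a k)).eventually_lt_const h2
      obtain ⟨N, hN⟩ := h3.exists
      exact ⟨N, by exact_mod_cast hN⟩
    set δ : ℝ := ε / (2 * (N : ℝ) ^ 2 + 2) with hδ
    have hδpos : 0 < δ := by positivity
    have hδlt : δ < 1 := by
      rw [hδ, div_lt_one (by positivity)]
      nlinarith [sq_nonneg (N : ℝ)]
    set z : ℝ := 1 - δ with hzdef
    have hz0 : 0 < z := by simp only [hzdef]; linarith
    have hz1 : z < 1 := by simp only [hzdef]; linarith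
    have hmain := stmt16_bound n hn a ha0 ha0pos hsum hsum1 hmom hγ x hxpos hrec M hM0 hM N
      z hz0 hz1
    have h1z : 1 - z = δ := by simp only [hzdef]; ring
    have hhalf : (1 - z) * (N : ℝ) ^ 2 ≤ ε / 2 := by
      rw [h1z, hδ, div_mul_eq_mul_div, div_le_div_iff₀ (by positivity) (by norm_num : (0:ℝ) < 2)]
      nlinarith [sq_nonneg (N : ℝ)]
    calc a 0 * x 0 ≤ M * ((1 - z) * (N:ℝ)^2 + (∑' k : ℕ, ((k + N : ℕ) : ℝ) * a (k + N))) := hmain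
      _ ≤ M * (ε / 2 + ε / 2) := by
          refine mul_le_mul_of_nonneg_left ?_ hM0.le
          linarith
      _ = M * ε := by ring
  have hb0 : 0 < a 0 * x 0 := mul_pos ha0pos (hxpos 0)
  have h1 := key (min (1/2) (a 0 * x 0 / (2 * M))) (by positivity)
    (lt_of_le_of_lt (min_le_left _ _) (by norm_num))
  have h2 : M * min (1/2) (a 0 * x 0 / (2 * M)) ≤ M * (a 0 * x 0 / (2 * M)) :=
    mul_le_mul_of_nonneg_left (min_le_right _ _) hM0.le
  have h3 : M * (a 0 * x 0 / (2 * M)) = a 0 * x 0 / 2 := by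
    field_simp
  rw [h3] at h2
  linarith

/-- Critical case of Theorem 2 (ii): if `τ(1) = 1` and `τ'(1) = n`, every positive solution
of `x = T x` has divergent sum and infinite `limsup`. -/
theorem stmt16 (n : ℕ) (hn : 1 ≤ n) (t : ℤ → ℝ)
    (ht : ∀ j : ℤ, -(n : ℤ) ≤ j → 0 ≤ t j) (htn : 0 < t (-(n : ℤ)))
    (hsum : Summable fun k : ℕ => t ((k : ℤ) - n))
    (hsum1 : (∑' k : ℕ, t ((k : ℤ) - n)) = 1)
    (hmom : Summable fun k : ℕ => (k : ℝ) * t ((k : ℤ) - n))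
    (hγ : (∑' k : ℕ, (k : ℝ) * t ((k : ℤ) - n)) = n)
    (x : ℕ → ℝ) (hxpos : ∀ k, 0 < x k)
    (hrec : ∀ k : ℕ, x k = ∑ j ∈ Finset.range (k + n + 1), t ((j : ℤ) - n) * x (k + n - j)) :
    (¬ Summable x) ∧ Filter.limsup (fun k => ((x k : ℝ) : EReal)) atTop = ⊤ := by
  set a : ℕ → ℝ := fun k : ℕ => t ((k : ℤ) - n) with ha
  have ha0 : ∀ k, 0 ≤ a k := by
    intro k
    refine ht _ ?_
    have : (0:ℤ) ≤ (k : ℤ) := Int.natCast_nonneg k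
    linarith
  have ha0pos : 0 < a 0 := by
    have : ((0:ℕ) : ℤ) - n = -(n : ℤ) := by simp
    simpa [ha, this] using htn
  have core := stmt16_core n hn a ha0 ha0pos hsum hsum1 hmom hγ x hxpos hrec
  constructor
  · intro hs
    exact core (∑' k, x k) (fun k => Summable.le_tsum hs k (fun j _ => (hxpos j).le))
  · by_contra h
    have hlt : Filter.limsup (fun k => ((x k : ℝ) : EReal)) atTop < ⊤ := lt_top_iff_ne_top.mpr h
    obtain ⟨r, hr1, -⟩ := EReal.lt_iff_exists_real_btwn.mp hlt
    have hev : ∀ᶠ k in atTop, ((x k : ℝ) : EReal) < (r : EReal) :=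
      Filter.eventually_lt_of_limsup_lt hr1
    obtain ⟨K, hK⟩ := Filter.eventually_atTop.mp hev
    refine core (|r| + ∑ j ∈ Finset.range K, x j) (fun k => ?_)
    have hsum_nonneg : 0 ≤ ∑ j ∈ Finset.range K, x j :=
      Finset.sum_nonneg fun j _ => (hxpos j).le
    rcases le_or_gt K k with hk | hk
    · have : x k < r := by exact_mod_cast hK k hk
      have : x k ≤ |r| := this.le.trans (le_abs_self r)
      linarith
    · have : x k ≤ ∑ j ∈ Finset.range K, x j :=
        Finset.single_le_sum (fun j _ => (hxpos j).le) (Finset.mem_range.mpr hk)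
      have := abs_nonneg r
      linarith
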